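/- arXiv:1807.01832 — 5 statements merged into one kernel-verified Lean document; each statement's English description precedes it below -/
import Mathlib

section
/- Let 0 < β < 1/2, f(u) = u(u-β)(1-u), F(u) = -∫₀ᵘ f = u⁴/4 - (1+β)u³/3 + βu²/2, and for γ > 0 set L_γ(μ) = μ²/(2γ) + F(μ). If γ > γ* = 9/((1-2β)(2-β)) and 0, μ₂, μ₃ are the three solutions of f(u) = u/γ with 0 < μ₂ < μ₃, then L_γ(μ₂) > L_γ(0) > L_γ(μ₃). -/
theorem stmt_2 (β γ μ₂ μ₃ : ℝ) (f F L : ℝ → ℝ)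
    (hβ : 0 < β ∧ β < 1/2)
    (hf : ∀ u, f u = u * (u - β) * (1 - u))
    (hF : ∀ u, F u = u^4 / 4 - (1 + β) * u^3 / 3 + β * u^2 / 2)
    (hL : ∀ μ, L μ = μ^2 / (2 * γ) + F μ)
    (hγ : γ > 9 / ((1 - 2*β) * (2 - β)))
    (hroots : {u : ℝ | f u = u / γ} = {0, μ₂, μ₃})
    (hord : 0 < μ₂ ∧ μ₂ < μ₃) :
    L μ₂ > L 0 ∧ L 0 > L μ₃ := by
  obtain ⟨hb1, hb2⟩ := hβ
  obtain ⟨h2, h23⟩ := hord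
  have h3 : 0 < μ₃ := h2.trans h23
  have hD : (0:ℝ) < (1 - 2*β) * (2 - β) := by nlinarith
  have hγ0 : 0 < γ := lt_trans (div_pos (by norm_num) hD) hγ
  have h9 : 9 < γ * ((1 - 2*β) * (2 - β)) := (div_lt_iff₀ hD).mp hγ
  -- both μ₂, μ₃ are roots
  have hm2 : f μ₂ = μ₂ / γ := by
    have : μ₂ ∈ ({0, μ₂, μ₃} : Set ℝ) := by simp
    rw [← hroots] at this; exact this
  have hm3 : f μ₃ = μ₃ / γ := by
    have : μ₃ ∈ ({0, μ₂, μ₃} : Set ℝ) := by simp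
    rw [← hroots] at this; exact this
  -- cancel the nonzero factor μᵢ
  have E2 : γ * ((μ₂ - β) * (1 - μ₂)) = 1 := by
    have h := hm2
    rw [hf] at h
    have h' : μ₂ * (γ * ((μ₂ - β) * (1 - μ₂))) = μ₂ * 1 := by
      field_simp at h
      nlinarith [h]
    exact mul_left_cancel₀ (ne_of_gt h2) h'
  have E3 : γ * ((μ₃ - β) * (1 - μ₃)) = 1 := by
    have h := hm3
    rw [hf] at h
    have h' : μ₃ * (γ * ((μ₃ - β) * (1 - μ₃))) = μ₃ * 1 := by
      field_simp at h
      nlinarith [h]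
    exact mul_left_cancel₀ (ne_of_gt h3) h'
  -- Vieta: sum of roots
  have hsum : μ₂ + μ₃ = 1 + β := by
    have h0 : γ * ((μ₂ - μ₃) * ((1 + β) - (μ₂ + μ₃))) = 0 := by nlinarith [E2, E3]
    have h1 : (μ₂ - μ₃) * ((1 + β) - (μ₂ + μ₃)) = 0 := by
      rcases mul_eq_zero.mp h0 with h | h
      · exact absurd h (ne_of_gt hγ0)
      · exact h
    rcases mul_eq_zero.mp h1 with h | h
    · linarith [sub_eq_zero.mp h]
    · linarith [sub_eq_zero.mp h]
  set c : ℝ := 2 * (1 + β) / 3 with hc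
  have hq : γ * ((c - μ₂) * (c - μ₃)) = 1 - γ * ((1 - 2*β) * (2 - β)) / 9 := by
    have hμ3 : μ₃ = 1 + β - μ₂ := by linarith
    rw [hμ3, hc]
    nlinarith [E2]
  have hqneg : (c - μ₂) * (c - μ₃) < 0 := by
    have : γ * ((c - μ₂) * (c - μ₃)) < 0 := by rw [hq]; linarith
    nlinarith
  have hc2 : μ₂ < c := by nlinarith
  have hc3 : c < μ₃ := by nlinarith
  -- 1/γ in terms of roots
  have inv2 : (1:ℝ) / γ = (μ₂ - β) * (1 - μ₂) := by
    field_simp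
    linarith [E2]
  have inv3 : (1:ℝ) / γ = (μ₃ - β) * (1 - μ₃) := by
    field_simp
    linarith [E3]
  have hL0 : L 0 = 0 := by rw [hL, hF]; ring
  have key2 : L μ₂ = μ₂^3 * (2 * (1 + β) - 3 * μ₂) / 12 := by
    rw [hL, hF, show μ₂^2 / (2 * γ) = μ₂^2 * (1/γ) / 2 from by ring, inv2]
    ring
  have key3 : L μ₃ = μ₃^3 * (2 * (1 + β) - 3 * μ₃) / 12 := by
    rw [hL, hF, show μ₃^2 / (2 * γ) = μ₃^2 * (1/γ) / 2 from by ring, inv3]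
    ring
  constructor
  · rw [hL0, key2]
    have : 0 < 2 * (1 + β) - 3 * μ₂ := by rw [hc] at hc2; linarith
    positivity
  · rw [hL0, key3]
    have h' : 2 * (1 + β) - 3 * μ₃ < 0 := by rw [hc] at hc3; linarith
    have : μ₃^3 * (2 * (1 + β) - 3 * μ₃) < 0 :=
      mul_neg_of_pos_of_neg (by positivity) h'
    linarith
end

section
/- Let 0 < β < 1/2, f(u) = u(u-β)(1-u), γ* = 9/((1-2β)(2-β)), and let γ̃₁ be determined by f(ρ̂) = ρ̂/γ̃₁ where ρ̂ = (1+β+√(β²-β+1))/3. If γ̃₁ < γ < γ* then L_γ(μ₂) > L_γ(μ₃) > L_γ(0), where L_γ(μ) = μ²/(2γ) + F(μ) and 0 < μ₂ < μ₃ are the positive solutions of f(u) = u/γ. -/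
set_option maxHeartbeats 1000000 in
theorem stmt_3 (β γ γ₁ μ₂ μ₃ : ℝ) (f F L : ℝ → ℝ)
    (hβ : 0 < β ∧ β < 1/2)
    (hf : ∀ u, f u = u * (u - β) * (1 - u))
    (hF : ∀ u, F u = u^4 / 4 - (1 + β) * u^3 / 3 + β * u^2 / 2)
    (hL : ∀ μ, L μ = μ^2 / (2 * γ) + F μ)
    (hγ₁ : f ((1 + β + Real.sqrt (β^2 - β + 1)) / 3)
         = ((1 + β + Real.sqrt (β^2 - β + 1)) / 3) / γ₁)
    (hγ : γ₁ < γ ∧ γ < 9 / ((1 - 2*β) * (2 - β)))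
    (hroots : {u : ℝ | f u = u / γ} = {0, μ₂, μ₃})
    (hord : 0 < μ₂ ∧ μ₂ < μ₃) :
    L μ₂ > L μ₃ ∧ L μ₃ > L 0 := by
  obtain ⟨hβ0, hβ2⟩ := hβ
  obtain ⟨hγl, hγu⟩ := hγ
  obtain ⟨hμ2, h23⟩ := hord
  have hμ3 : 0 < μ₃ := hμ2.trans h23
  set S := Real.sqrt (β^2 - β + 1) with hSdef
  have hSsq : S^2 = β^2 - β + 1 := Real.sq_sqrt (by nlinarith)
  have hS0 : 0 ≤ S := Real.sqrt_nonneg _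
  have hρlt1 : (1 + β + S)/3 < 1 := by nlinarith
  have hρgtβ : β < (1 + β + S)/3 := by nlinarith
  have hρ0 : 0 < (1 + β + S)/3 := by nlinarith
  have hfρ : 0 < f ((1 + β + S)/3) := by
    rw [hf]
    exact mul_pos (mul_pos hρ0 (by linarith)) (by linarith)
  have hγ₁pos : 0 < γ₁ := by
    by_contra h
    push_neg at h
    have hle : ((1 + β + S)/3)/γ₁ ≤ 0 :=
      div_nonpos_of_nonneg_of_nonpos hρ0.le h
    rw [← hγ₁] at hle
    linarith
  have hγpos : 0 < γ := hγ₁pos.trans hγl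
  have hγne : γ ≠ 0 := ne_of_gt hγpos
  -- membership facts
  have hm2 : f μ₂ = μ₂/γ := by
    have : μ₂ ∈ ({0, μ₂, μ₃} : Set ℝ) := by simp
    rw [← hroots] at this
    exact this
  have hm3 : f μ₃ = μ₃/γ := by
    have : μ₃ ∈ ({0, μ₂, μ₃} : Set ℝ) := by simp
    rw [← hroots] at this
    exact this
  rw [hf] at hm2 hm3
  have h2' : μ₂ * (μ₂ - β) * (1 - μ₂) * γ = μ₂ := (eq_div_iff hγne).mp hm2
  have h3' : μ₃ * (μ₃ - β) * (1 - μ₃) * γ = μ₃ := (eq_div_iff hγne).mp hm3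
  have q2 : (μ₂ - β) * (1 - μ₂) * γ = 1 := by
    have key : μ₂ * ((μ₂ - β) * (1 - μ₂) * γ - 1) = 0 := by linear_combination h2'
    rcases mul_eq_zero.mp key with h | h
    · exact absurd h (ne_of_gt hμ2)
    · linarith
  have q3 : (μ₃ - β) * (1 - μ₃) * γ = 1 := by
    have key : μ₃ * ((μ₃ - β) * (1 - μ₃) * γ - 1) = 0 := by linear_combination h3'
    rcases mul_eq_zero.mp key with h | h
    · exact absurd h (ne_of_gt hμ3)
    · linarith
  -- Vieta: sum
  have hs : μ₂ + μ₃ = 1 + β := by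
    have key : (μ₃ - μ₂) * ((μ₂ + μ₃ - (1 + β)) * γ) = 0 := by
      linear_combination q2 - q3
    rcases mul_eq_zero.mp key with h | h
    · exact absurd h (by intro h'; linarith [sub_pos.mpr h23])
    · rcases mul_eq_zero.mp h with h' | h'
      · linarith
      · exact absurd h' hγne
  -- 1/γ = μ₂ μ₃ - β  (in multiplied form)
  have hone : (μ₂ * μ₃ - β) * γ = 1 := by
    linear_combination q2 + (μ₂ * γ) * hs
  -- γ < γ* gives μ₃ < 2 μ₂
  have hdpos : 0 < (1 - 2*β) * (2 - β) := by nlinarith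
  have hγu' : (1 - 2*β) * (2 - β) * γ < 9 := by
    have h := (lt_div_iff₀ hdpos).mp hγu
    linarith [h, mul_comm γ ((1 - 2*β) * (2 - β))]
  have hp : 9 * (μ₂ * μ₃) > 2 * (μ₂ + μ₃)^2 := by
    -- 1/γ > d/9, i.e. 9 > d γ, and (μ₂μ₃ - β) γ = 1
    have h9 : (1 - 2*β) * (2 - β) * γ < 9 := hγu'
    -- μ₂μ₃ - β = 1/γ > d/9  ⟺  9(μ₂μ₃ - β) > d  (multiply by γ > 0)
    have key : 9 * (μ₂ * μ₃ - β) * γ > (1 - 2*β) * (2 - β) * γ := by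
      calc (1 - 2*β) * (2 - β) * γ < 9 := h9
        _ = 9 * ((μ₂ * μ₃ - β) * γ) := by rw [hone]; ring
        _ = 9 * (μ₂ * μ₃ - β) * γ := by ring
    have key2 : 9 * (μ₂ * μ₃ - β) > (1 - 2*β) * (2 - β) :=
      lt_of_mul_lt_mul_right (by linarith [key]) hγpos.le
    nlinarith [key2, hs]
  have h2μ : μ₃ < 2 * μ₂ := by
    by_contra h
    push_neg at h
    have h1 : 0 ≤ μ₃ - 2*μ₂ := by linarith
    have h2 : 0 < 2*μ₃ - μ₂ := by linarith
    have hexp : (μ₃ - 2*μ₂) * (2*μ₃ - μ₂) = 2*μ₃^2 - 5*(μ₂*μ₃) + 2*μ₂^2 := by ring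
    have hexp2 : 2 * (μ₂ + μ₃)^2 = 2*μ₂^2 + 4*(μ₂*μ₃) + 2*μ₃^2 := by ring
    nlinarith [mul_nonneg h1 h2.le, hp, hexp, hexp2]
  -- rewrite L in divisor-free form
  have hd2 : μ₂^2/(2*γ) = μ₂^2 * (μ₂*μ₃ - β)/2 := by
    rw [div_eq_iff (by positivity : (2:ℝ)*γ ≠ 0)]
    linear_combination (-(μ₂^2)) * hone
  have hd3 : μ₃^2/(2*γ) = μ₃^2 * (μ₂*μ₃ - β)/2 := by
    rw [div_eq_iff (by positivity : (2:ℝ)*γ ≠ 0)]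
    linear_combination (-(μ₃^2)) * hone
  constructor
  · rw [hL, hL, hF, hF, hd2, hd3]
    have e12 : (μ₂^2 * (μ₂*μ₃ - β)/2 + (μ₂^4/4 - (1+β)*μ₂^3/3 + β*μ₂^2/2))
             - (μ₃^2 * (μ₂*μ₃ - β)/2 + (μ₃^4/4 - (1+β)*μ₃^3/3 + β*μ₃^2/2))
             = ((μ₂+μ₃)/12) * (μ₃-μ₂)^3 := by
      linear_combination ((μ₂^3 - μ₃^3)/3) * hs
    have hpos : 0 < ((μ₂+μ₃)/12) * (μ₃-μ₂)^3 := by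
      apply mul_pos (by linarith)
      exact pow_pos (by linarith) 3
    linarith [e12, hpos]
  · rw [hL, hL, hF, hF, hd3]
    have e3 : μ₃^2 * (μ₂*μ₃ - β)/2 + (μ₃^4/4 - (1+β)*μ₃^3/3 + β*μ₃^2/2)
            = μ₃^3 * (2*μ₂ - μ₃)/12 := by
      linear_combination (μ₃^3/3) * hs
    have hpos : 0 < μ₃^3 * (2*μ₂ - μ₃)/12 := by
      apply div_pos (mul_pos (pow_pos hμ3 3) (by linarith)) (by norm_num)
    have h0 : (0:ℝ)^2/(2*γ) + ((0:ℝ)^4/4 - (1+β)*(0:ℝ)^3/3 + β*(0:ℝ)^2/2) = 0 := by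
      norm_num
    rw [h0]
    linarith [e3, hpos]
end

section
/- If w ∈ H¹ₑₓ(ℝ), i.e. ∫ℝ eˣ(w² + w'²) dx < ∞, then (1/4)∫ℝ eˣ w² dx ≤ ∫ℝ eˣ w'² dx. -/
open MeasureTheory Real

theorem stmt_4 (w : ℝ → ℝ)
    (hw : Differentiable ℝ w)
    (hH1 : Integrable (fun x => Real.exp x * ((w x)^2 + (deriv w x)^2))) :
    (1/4) * ∫ x, Real.exp x * (w x)^2 ≤ ∫ x, Real.exp x * (deriv w x)^2 := by
  have hwm : Measurable w := hw.continuous.measurable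
  have hdm : Measurable (deriv w) := measurable_deriv w
  -- Integrability of each piece
  have hA : Integrable (fun x => Real.exp x * (w x)^2) := by
    refine hH1.mono' ?_ ?_
    · exact (Real.measurable_exp.mul (hwm.pow_const 2)).aestronglyMeasurable
    · filter_upwards with x
      rw [Real.norm_of_nonneg (by positivity)]
      nlinarith [Real.exp_pos x, sq_nonneg (deriv w x)]
  have hB : Integrable (fun x => Real.exp x * (deriv w x)^2) := by
    refine hH1.mono' ?_ ?_
    · exact (Real.measurable_exp.mul (hdm.pow_const 2)).aestronglyMeasurable
    · filter_upwards with x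
      rw [Real.norm_of_nonneg (by positivity)]
      nlinarith [Real.exp_pos x, sq_nonneg (w x)]
  -- The derivative of F x = exp x * (w x)^2
  set F' : ℝ → ℝ := fun x => Real.exp x * ((w x)^2 + 2 * w x * deriv w x) with hF'
  have hderiv : ∀ x, HasDerivAt (fun x => Real.exp x * (w x)^2) (F' x) x := by
    intro x
    have h1 : HasDerivAt w (deriv w x) x := (hw x).hasDerivAt
    have h2 : HasDerivAt (fun x => (w x)^2) (2 * w x * deriv w x) x := by
      have := h1.fun_pow 2
      simpa [mul_comm, mul_assoc, mul_left_comm] using this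
    have h3 := (Real.hasDerivAt_exp x).fun_mul h2
    refine h3.congr_deriv ?_
    simp only [hF']
    ring
  have hF'int : Integrable F' := by
    refine (hH1.const_mul 2).mono' ?_ ?_
    · exact (Real.measurable_exp.mul ((hwm.pow_const 2).add
        ((measurable_const.mul hwm).mul hdm))).aestronglyMeasurable
    · filter_upwards with x
      simp only [hF', Real.norm_eq_abs]
      rw [abs_le]
      constructor <;> nlinarith [Real.exp_pos x, sq_nonneg (w x + deriv w x),
        sq_nonneg (w x - deriv w x), sq_nonneg (w x), sq_nonneg (deriv w x)]
  have hzero : ∫ x, F' x = 0 :=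
    integral_eq_zero_of_hasDerivAt_of_integrable hderiv hF'int hA
  have hmono : ∫ x, ((1/2) * (Real.exp x * (w x)^2) - 2 * (Real.exp x * (deriv w x)^2)) ≤
      ∫ x, F' x := by
    refine integral_mono ((hA.const_mul _).sub (hB.const_mul _)) hF'int ?_
    intro x
    simp only [hF']
    nlinarith [sq_nonneg (w x + 2 * deriv w x), Real.exp_pos x]
  rw [integral_sub (hA.const_mul _) (hB.const_mul _), integral_const_mul, integral_const_mul,
    hzero] at hmono
  linarith
end

section
/- If w ∈ H¹ₑₓ(ℝ), then for every x ∈ ℝ, eˣ w(x)² ≤ ∫ₓ^∞ e^y w'(y)² dy. -/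
open MeasureTheory Real

theorem stmt_5 (w : ℝ → ℝ)
    (hw : Differentiable ℝ w)
    (hH1 : Integrable (fun x => Real.exp x * ((w x)^2 + (deriv w x)^2))) :
    ∀ x : ℝ, Real.exp x * (w x)^2 ≤ ∫ y in Set.Ioi x, Real.exp y * (deriv w y)^2 := by
  intro x
  set F : ℝ → ℝ := fun y => Real.exp y * (w y)^2 with hF
  set g : ℝ → ℝ := fun y => Real.exp y * (deriv w y)^2 with hg
  set D : ℝ → ℝ := fun y => Real.exp y * ((w y)^2 + 2 * w y * deriv w y) with hD
  have hmw : Measurable w := hw.continuous.measurable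
  have hmw' : Measurable (deriv w) := measurable_deriv w
  have hmF : Measurable F := by
    exact (Real.measurable_exp.comp measurable_id).mul (hmw.pow_const 2)
  have hmg : Measurable g := by
    exact (Real.measurable_exp.comp measurable_id).mul (hmw'.pow_const 2)
  have hmD : Measurable D := by
    apply (Real.measurable_exp.comp measurable_id).mul
    exact (hmw.pow_const 2).add ((measurable_const.mul hmw).mul hmw')
  -- integrability
  have hFint : Integrable F := by
    refine hH1.mono' hmF.aestronglyMeasurable ?_
    filter_upwards with y
    have h1 := Real.exp_pos y
    have h2 := sq_nonneg (deriv w y)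
    have h3 := sq_nonneg (w y)
    simp only [hF, Real.norm_eq_abs, abs_of_nonneg (mul_nonneg (Real.exp_pos y).le h3)]
    nlinarith
  have hgint : Integrable g := by
    refine hH1.mono' hmg.aestronglyMeasurable ?_
    filter_upwards with y
    have h1 := Real.exp_pos y
    have h2 := sq_nonneg (deriv w y)
    have h3 := sq_nonneg (w y)
    simp only [hg, Real.norm_eq_abs, abs_of_nonneg (mul_nonneg (Real.exp_pos y).le h2)]
    nlinarith
  have hDint : Integrable D := by
    refine (hH1.const_mul 2).mono' hmD.aestronglyMeasurable ?_
    filter_upwards with y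
    have h1 := Real.exp_pos y
    have h2 := sq_nonneg (w y + deriv w y)
    have h4 := sq_nonneg (w y - deriv w y)
    rw [Real.norm_eq_abs, abs_le]
    constructor <;> simp only [hD] <;> nlinarith
  -- derivative of F
  have hFd : ∀ y, HasDerivAt F (D y) y := by
    intro y
    have h1 : HasDerivAt Real.exp (Real.exp y) y := Real.hasDerivAt_exp y
    have h2 : HasDerivAt (fun z => (w z)^2) (2 * w y * deriv w y) y := by
      have := ((hw y).hasDerivAt.pow 2)
      simpa [Pi.pow_def, mul_comm, mul_assoc, mul_left_comm] using this
    have := h1.mul h2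
    simpa [Pi.mul_def, hF, hD] using this.congr_deriv (by ring)
  -- main bound: for R ≥ x, F x ≤ F R + ∫ Ioi x g
  have key : ∀ R, x ≤ R → F x ≤ F R + ∫ y in Set.Ioi x, g y := by
    intro R hxR
    have hftc : ∫ y in x..R, D y = F R - F x := by
      have : ∀ y ∈ Set.uIcc x R, HasDerivAt F (D y) y := fun y _ => hFd y
      exact intervalIntegral.integral_eq_sub_of_hasDerivAt this hDint.intervalIntegrable
    have hmono : ∫ y in x..R, (-g y) ≤ ∫ y in x..R, D y := by
      apply intervalIntegral.integral_mono_on hxR hgint.neg.intervalIntegrable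
        hDint.intervalIntegrable
      intro y _
      have h1 := Real.exp_pos y
      have h2 := sq_nonneg (w y + deriv w y)
      show -g y ≤ D y
      simp only [hD, hg]
      nlinarith
    have hineq : -∫ y in x..R, g y ≤ F R - F x := by
      rw [← hftc]
      simpa using hmono
    have hsub : ∫ y in x..R, g y ≤ ∫ y in Set.Ioi x, g y := by
      rw [intervalIntegral.integral_of_le hxR]
      apply setIntegral_mono_set hgint.integrableOn
      · filter_upwards with y
        have h1 := Real.exp_pos y
        have h3 := sq_nonneg (deriv w y)
        positivity
      · filter_upwards with y hy
        exact hy.1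
    linarith
  -- F gets small along a sequence
  have hsmall : ∀ ε > 0, ∃ R ≥ x, F R < ε := by
    intro ε hε
    by_contra hcon
    push_neg at hcon
    have hle : ∀ᵐ y ∂(volume.restrict (Set.Ici x)), ‖(ε : ℝ)‖ ≤ F y := by
      rw [ae_restrict_iff' measurableSet_Ici]
      filter_upwards with y hy
      rw [Real.norm_eq_abs, abs_of_pos hε]
      exact hcon y hy
    have hconst : IntegrableOn (fun _ => ε) (Set.Ici x) := by
      exact Integrable.mono' hFint.integrableOn aestronglyMeasurable_const hle
    rw [integrableOn_const_iff] at hconst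
    rcases hconst with h | h
    · exact hε.ne' (by simpa using h)
    · simp [Real.volume_Ici] at h
  refine le_of_forall_pos_le_add ?_
  intro ε hε
  obtain ⟨R, hR, hFR⟩ := hsmall ε hε
  have := key R hR
  have hx : F x = Real.exp x * (w x)^2 := rfl
  linarith
end

section
/- For w ∈ H¹ₑₓ(ℝ), ∫ℝ eˣ w'² dx ≤ ‖w‖²_{H¹ₑₓ} ≤ 5 ∫ℝ eˣ w'² dx, where ‖w‖²_{H¹ₑₓ} = ∫ℝ eˣ w'² dx + ∫ℝ eˣ w² dx; hence ‖w'‖_{L²ₑₓ} is an equivalent norm on H¹ₑₓ. -/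
open MeasureTheory Real

theorem stmt_6 (w : ℝ → ℝ)
    (hw : Differentiable ℝ w)
    (hH1 : Integrable (fun x => Real.exp x * ((w x)^2 + (deriv w x)^2))) :
    (∫ x, Real.exp x * (deriv w x)^2)
      ≤ (∫ x, Real.exp x * (deriv w x)^2) + ∫ x, Real.exp x * (w x)^2 ∧
    (∫ x, Real.exp x * (deriv w x)^2) + (∫ x, Real.exp x * (w x)^2)
      ≤ 5 * ∫ x, Real.exp x * (deriv w x)^2 := by
  have hwc : Continuous w := hw.continuous
  have hw' : Measurable (deriv w) := measurable_deriv w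
  have hmeasA : AEStronglyMeasurable (fun x => Real.exp x * (w x)^2) volume :=
    (Real.continuous_exp.mul (hwc.pow 2)).aestronglyMeasurable
  have hmeasB : AEStronglyMeasurable (fun x => Real.exp x * (deriv w x)^2) volume :=
    (measurable_exp.mul (hw'.pow_const 2)).aestronglyMeasurable
  have hsq : ∀ x : ℝ, (0:ℝ) ≤ (w x)^2 + (deriv w x)^2 := fun x => by positivity
  have hA : Integrable (fun x => Real.exp x * (w x)^2) := by
    refine hH1.mono' hmeasA (Filter.Eventually.of_forall fun x => ?_)
    rw [Real.norm_eq_abs, abs_of_nonneg (by positivity)]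
    nlinarith [Real.exp_pos x, sq_nonneg (deriv w x), sq_nonneg (w x), (Real.exp_pos x).le]
  have hB : Integrable (fun x => Real.exp x * (deriv w x)^2) := by
    refine hH1.mono' hmeasB (Filter.Eventually.of_forall fun x => ?_)
    rw [Real.norm_eq_abs, abs_of_nonneg (by positivity)]
    nlinarith [Real.exp_pos x, sq_nonneg (w x), (Real.exp_pos x).le]
  -- F = exp x * w^2, derivative
  set F' : ℝ → ℝ := fun x => Real.exp x * ((w x)^2 + 2 * w x * deriv w x) with hF'def
  have hderiv : ∀ x, HasDerivAt (fun x => Real.exp x * (w x)^2) (F' x) x := by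
    intro x
    have h1 : HasDerivAt Real.exp (Real.exp x) x := Real.hasDerivAt_exp x
    have h2 : HasDerivAt (fun x => (w x)^2) (2 * w x * deriv w x) x := by
      have := ((hw x).hasDerivAt).fun_pow 2
      simpa [mul_comm, mul_assoc, mul_left_comm] using this
    have := h1.fun_mul h2
    refine this.congr_deriv ?_
    show _ = Real.exp x * ((w x)^2 + 2 * w x * deriv w x)
    ring
  have hF'meas : AEStronglyMeasurable F' volume :=
    (measurable_exp.mul ((hwc.measurable.pow_const 2).add
      ((measurable_const.mul hwc.measurable).mul hw'))).aestronglyMeasurable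
  have hF'int : Integrable F' := by
    refine (hH1.const_mul 2).mono' hF'meas (Filter.Eventually.of_forall fun x => ?_)
    rw [Real.norm_eq_abs, hF'def]
    have he := (Real.exp_pos x).le
    rw [abs_mul, abs_of_nonneg he]
    have : |(w x)^2 + 2 * w x * deriv w x| ≤ 2 * ((w x)^2 + (deriv w x)^2) := by
      rw [abs_le]
      constructor <;> nlinarith [sq_nonneg (w x + deriv w x), sq_nonneg (w x - deriv w x)]
    calc Real.exp x * |(w x)^2 + 2 * w x * deriv w x|
        ≤ Real.exp x * (2 * ((w x)^2 + (deriv w x)^2)) := by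
          exact mul_le_mul_of_nonneg_left this he
      _ = 2 * (Real.exp x * ((w x)^2 + (deriv w x)^2)) := by ring
  have hzero : ∫ x, F' x = 0 :=
    integral_eq_zero_of_hasDerivAt_of_integrable hderiv hF'int hA
  -- G = exp x * (w + 2 w')^2 = 2 F' - exp w^2 + 4 exp w'^2
  have hGint : Integrable (fun x => Real.exp x * (w x + 2 * deriv w x)^2) := by
    have : (fun x => Real.exp x * (w x + 2 * deriv w x)^2)
        = fun x => 2 * F' x - Real.exp x * (w x)^2 + 4 * (Real.exp x * (deriv w x)^2) := by
      funext x; rw [hF'def]; ring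
    rw [this]
    exact (((hF'int.const_mul 2).sub hA).add (hB.const_mul 4))
  have hGnonneg : 0 ≤ ∫ x, Real.exp x * (w x + 2 * deriv w x)^2 :=
    integral_nonneg fun x => by positivity
  have hGval : ∫ x, Real.exp x * (w x + 2 * deriv w x)^2
      = 2 * (∫ x, F' x) - (∫ x, Real.exp x * (w x)^2)
        + 4 * ∫ x, Real.exp x * (deriv w x)^2 := by
    have : (fun x => Real.exp x * (w x + 2 * deriv w x)^2)
        = fun x => 2 * F' x - Real.exp x * (w x)^2 + 4 * (Real.exp x * (deriv w x)^2) := by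
      funext x; rw [hF'def]; ring
    have h1 : Integrable (fun x => 2 * F' x - Real.exp x * (w x)^2) :=
      (hF'int.const_mul 2).sub hA
    rw [this, integral_add h1 (hB.const_mul 4),
      integral_sub (hF'int.const_mul 2) hA, integral_const_mul, integral_const_mul]
  have hAnonneg : 0 ≤ ∫ x, Real.exp x * (w x)^2 :=
    integral_nonneg fun x => by positivity
  have key : (∫ x, Real.exp x * (w x)^2) ≤ 4 * ∫ x, Real.exp x * (deriv w x)^2 := by
    rw [hGval, hzero] at hGnonneg; linarith
  exact ⟨by linarith, by linarith⟩
end
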